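/- arXiv:2402.05074 — 4 statements merged into one kernel-verified Lean document; each statement's English description precedes it below -/
import Mathlib

section
/- (Theorem 1, global discrimination.) Let d₁, d₂ ≥ 1, set d := d₁·d₂, and let B be a nonempty finite type. Let (p_b, ρ_b)_{b∈B} be an ensemble of density matrices indexed by Fin d₁ × Fin d₂, let (R_b)_{b∈B} be nonnegative reals such that each σ_b := (1+R_b)⁻¹ · (ρ_b + (R_b/d) · I) is separable, and let ℝ^M := max_{b∈B} R_b. Define P_G(η) := sSup { ∑_b p_b · Re Tr(M_b ρ_b) : (M_b)_{b∈B} a POVM } and P_G(ε) := sSup { ∑_b p_b · Re Tr(M_b σ_b) : (M_b)_{b∈B} a POVM }. Then P_G(η) ≤ (1 + ℝ^M) · P_G(ε). -/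
open Matrix
open scoped ComplexOrder Kronecker

/-- A density matrix: positive semidefinite with unit trace. -/
def IsDensityMatrix {n : Type*} [Fintype n] [DecidableEq n] (ρ : Matrix n n ℂ) : Prop :=
  ρ.PosSemidef ∧ ρ.trace = 1

/-- A POVM: a family of positive semidefinite matrices summing to the identity. -/
def IsPOVM {n B : Type*} [Fintype n] [DecidableEq n] [Fintype B]
    (M : B → Matrix n n ℂ) : Prop :=
  (∀ b, (M b).PosSemidef) ∧ ∑ b, M b = 1

/-- A bipartite state is separable if it is a convex combination of product
density matrices. -/
def IsSepState {d₁ d₂ : ℕ}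
    (ρ : Matrix (Fin d₁ × Fin d₂) (Fin d₁ × Fin d₂) ℂ) : Prop :=
  ρ ∈ convexHull ℝ { X | ∃ A : Matrix (Fin d₁) (Fin d₁) ℂ,
    ∃ C : Matrix (Fin d₂) (Fin d₂) ℂ,
      IsDensityMatrix A ∧ IsDensityMatrix C ∧ X = A ⊗ₖ C }

section Aux

variable {n : Type*} [Fintype n] [DecidableEq n]

lemma psd_trace_nonneg {M : Matrix n n ℂ} (hM : M.PosSemidef) : 0 ≤ M.trace := by
  rw [Matrix.trace]
  apply Finset.sum_nonneg
  intro i _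
  have := hM.dotProduct_mulVec_nonneg (Pi.single i 1)
  simpa [dotProduct, Matrix.mulVec, Pi.single_apply, Finset.sum_ite_eq] using this

lemma psd_real_smul {r : ℝ} (hr : 0 ≤ r) {M : Matrix n n ℂ} (hM : M.PosSemidef) :
    (r • M).PosSemidef := by
  have h : r • M = (r : ℂ) • M := by
    ext i j; simp [Complex.real_smul]
  rw [h]
  refine Matrix.PosSemidef.of_dotProduct_mulVec_nonneg ?_ ?_
  · show _ = _
    rw [Matrix.conjTranspose_smul, hM.1.eq]
    simp [Complex.conj_ofReal]
  · intro x
    simp only [Matrix.smul_mulVec, dotProduct_smul, smul_eq_mul]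
    exact mul_nonneg (by exact_mod_cast hr) (hM.dotProduct_mulVec_nonneg x)

lemma trace_mul_psd_nonneg {A B : Matrix n n ℂ} (hA : A.PosSemidef) (hB : B.PosSemidef) :
    0 ≤ (A * B).trace := by
  obtain ⟨C, rfl⟩ : ∃ C : Matrix n n ℂ, A = Cᴴ * C := by
    open scoped MatrixOrder in
    obtain ⟨X, hX, -, hXA⟩ :=
          CFC.exists_sqrt_of_isSelfAdjoint_of_quasispectrumRestricts hA.isHermitian
            (QuasispectrumRestricts.nnreal_of_nonneg hA.nonneg)
    refine ⟨X, ?_⟩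
    show A = star X * X
    rw [hX.star_eq, hXA]
  rw [Matrix.mul_assoc, Matrix.trace_mul_comm]
  exact psd_trace_nonneg (hB.mul_mul_conjTranspose_same C)

lemma re_nonneg_of_nonneg {z : ℂ} (hz : 0 ≤ z) : 0 ≤ z.re := by
  rw [Complex.le_def] at hz; simpa using hz.1

end Aux

theorem stmt1 {d₁ d₂ : ℕ} (hd₁ : 1 ≤ d₁) (hd₂ : 1 ≤ d₂)
    {B : Type*} [Fintype B] [Nonempty B]
    (p : B → ℝ) (ρ : B → Matrix (Fin d₁ × Fin d₂) (Fin d₁ × Fin d₂) ℂ)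
    (hp : ∀ b, 0 ≤ p b) (hpsum : ∑ b, p b = 1)
    (hρ : ∀ b, IsDensityMatrix (ρ b))
    (R : B → ℝ) (hR : ∀ b, 0 ≤ R b)
    (σ : B → Matrix (Fin d₁ × Fin d₂) (Fin d₁ × Fin d₂) ℂ)
    (hσ : ∀ b, σ b = ((1 + R b)⁻¹ : ℝ) •
      (ρ b + ((R b / (d₁ * d₂) : ℝ)) • (1 : Matrix (Fin d₁ × Fin d₂) (Fin d₁ × Fin d₂) ℂ)))
    (hσsep : ∀ b, IsSepState (σ b)) :
    sSup { x : ℝ | ∃ M : B → Matrix (Fin d₁ × Fin d₂) (Fin d₁ × Fin d₂) ℂ,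
        IsPOVM M ∧ x = ∑ b, p b * ((M b * ρ b).trace).re } ≤
      (1 + Finset.univ.sup' Finset.univ_nonempty R) *
        sSup { x : ℝ | ∃ M : B → Matrix (Fin d₁ × Fin d₂) (Fin d₁ × Fin d₂) ℂ,
          IsPOVM M ∧ x = ∑ b, p b * ((M b * σ b).trace).re } := by
  classical
  set RM := Finset.univ.sup' Finset.univ_nonempty R with hRMdef
  have hRM : ∀ b, R b ≤ RM := fun b => Finset.le_sup' R (Finset.mem_univ b)
  have hRM0 : 0 ≤ RM := (hR (Classical.arbitrary B)).trans (hRM _)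
  have h1RM : (0:ℝ) ≤ 1 + RM := by linarith
  have hd : (0:ℝ) < (d₁ * d₂ : ℕ) := by positivity
  have hdne : ((d₁ * d₂ : ℕ) : ℝ) ≠ 0 := ne_of_gt hd
  have h1Rb : ∀ b, (0:ℝ) < 1 + R b := fun b => by have := hR b; linarith
  -- σ is PSD with trace 1
  have hσpsd : ∀ b, (σ b).PosSemidef := by
    intro b
    rw [hσ b]
    exact psd_real_smul (inv_nonneg.mpr (h1Rb b).le)
      (((hρ b).1).add (psd_real_smul (div_nonneg (hR b) (by positivity)) Matrix.PosSemidef.one))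
  have htrσ : ∀ b, (σ b).trace = 1 := by
    intro b
    rw [hσ b, Matrix.trace_smul, Matrix.trace_add, Matrix.trace_smul, Matrix.trace_one, (hρ b).2]
    simp only [Fintype.card_prod, Fintype.card_fin]
    rw [Complex.real_smul, Complex.real_smul]
    have hdr : ((d₁:ℝ) * (d₂:ℝ)) ≠ 0 := by push_cast at hdne; exact hdne
    have hreal : ((1 + R b)⁻¹ : ℝ) * (1 + R b / ((d₁:ℝ) * d₂) * ((d₁:ℝ) * d₂)) = 1 := by
      field_simp
      rw [div_self (ne_of_gt (h1Rb b))]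
    push_cast
    exact_mod_cast hreal
  -- ρ in terms of σ
  have hkey : ∀ b, (1 + R b) • σ b = ρ b + ((R b / (d₁ * d₂) : ℝ)) • 1 := by
    intro b
    rw [hσ b, smul_smul, mul_inv_cancel₀ (ne_of_gt (h1Rb b)), one_smul]
  -- the σ-set is nonneg and bounded above by 1
  have hσset_nonneg : ∀ x ∈ { x : ℝ | ∃ M : B → Matrix (Fin d₁ × Fin d₂) (Fin d₁ × Fin d₂) ℂ,
      IsPOVM M ∧ x = ∑ b, p b * ((M b * σ b).trace).re }, 0 ≤ x := by
    rintro x ⟨M, hM, rfl⟩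
    apply Finset.sum_nonneg
    intro b _
    exact mul_nonneg (hp b) (re_nonneg_of_nonneg (trace_mul_psd_nonneg (hM.1 b) (hσpsd b)))
  have hbdd : BddAbove { x : ℝ | ∃ M : B → Matrix (Fin d₁ × Fin d₂) (Fin d₁ × Fin d₂) ℂ,
      IsPOVM M ∧ x = ∑ b, p b * ((M b * σ b).trace).re } := by
    refine ⟨1, ?_⟩
    rintro x ⟨M, hM, rfl⟩
    have hterm : ∀ b, ((M b * σ b).trace).re ≤ 1 := by
      intro b
      have hone : (1 : Matrix (Fin d₁ × Fin d₂) (Fin d₁ × Fin d₂) ℂ) - M b =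
          ∑ c ∈ Finset.univ.erase b, M c := by
        rw [← hM.2, ← Finset.add_sum_erase _ M (Finset.mem_univ b), add_sub_cancel_left]
      have hpsd : ((1 : Matrix (Fin d₁ × Fin d₂) (Fin d₁ × Fin d₂) ℂ) - M b).PosSemidef := by
        rw [hone]
        exact Finset.sum_induction M (·.PosSemidef) (fun a b ha hb => ha.add hb)
          Matrix.PosSemidef.zero (fun c _ => hM.1 c)
      have := re_nonneg_of_nonneg (trace_mul_psd_nonneg hpsd (hσpsd b))
      rw [Matrix.sub_mul, Matrix.trace_sub, Matrix.one_mul, htrσ b] at this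
      simp only [Complex.sub_re, Complex.one_re] at this
      linarith
    calc ∑ b, p b * ((M b * σ b).trace).re ≤ ∑ b, p b * 1 := by
          apply Finset.sum_le_sum
          intro b _
          exact mul_le_mul_of_nonneg_left (hterm b) (hp b)
      _ = 1 := by simp [hpsum]
  -- main bound
  apply Real.sSup_le
  · rintro x ⟨M, hM, rfl⟩
    have hterm : ∀ b, p b * ((M b * ρ b).trace).re ≤
        (1 + RM) * (p b * ((M b * σ b).trace).re) := by
      intro b
      have hσre : 0 ≤ ((M b * σ b).trace).re :=
        re_nonneg_of_nonneg (trace_mul_psd_nonneg (hM.1 b) (hσpsd b))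
      have hMre : 0 ≤ ((M b).trace).re := re_nonneg_of_nonneg (psd_trace_nonneg (hM.1 b))
      have hexp : ((M b * ρ b).trace).re =
          (1 + R b) * ((M b * σ b).trace).re - (R b / (d₁ * d₂)) * ((M b).trace).re := by
        have : M b * ((1 + R b) • σ b) = M b * (ρ b + ((R b / (d₁ * d₂) : ℝ)) • 1) := by
          rw [hkey b]
        rw [Matrix.mul_smul, Matrix.mul_add, Matrix.mul_smul, Matrix.mul_one] at this
        have htr := congrArg Matrix.trace this
        rw [Matrix.trace_smul, Matrix.trace_add, Matrix.trace_smul] at htr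
        rw [Complex.real_smul, Complex.real_smul] at htr
        have hre := congrArg Complex.re htr
        simp only [Complex.add_re, Complex.re_ofReal_mul] at hre
        linarith
      have h1 : ((M b * ρ b).trace).re ≤ (1 + R b) * ((M b * σ b).trace).re := by
        rw [hexp]
        have : 0 ≤ (R b / (d₁ * d₂)) * ((M b).trace).re :=
          mul_nonneg (div_nonneg (hR b) (by positivity)) hMre
        linarith
      have h2 : (1 + R b) * ((M b * σ b).trace).re ≤ (1 + RM) * ((M b * σ b).trace).re :=
        mul_le_mul_of_nonneg_right (by have := hRM b; linarith) hσre
      calc p b * ((M b * ρ b).trace).re ≤ p b * ((1 + RM) * ((M b * σ b).trace).re) :=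
            mul_le_mul_of_nonneg_left (h1.trans h2) (hp b)
        _ = (1 + RM) * (p b * ((M b * σ b).trace).re) := by ring
    calc ∑ b, p b * ((M b * ρ b).trace).re
        ≤ ∑ b, (1 + RM) * (p b * ((M b * σ b).trace).re) := Finset.sum_le_sum fun b _ => hterm b
      _ = (1 + RM) * ∑ b, p b * ((M b * σ b).trace).re := by rw [← Finset.mul_sum]
      _ ≤ (1 + RM) * sSup _ :=
          mul_le_mul_of_nonneg_left (le_csSup hbdd ⟨M, hM, rfl⟩) h1RM
  · exact mul_nonneg h1RM (Real.sSup_nonneg hσset_nonneg)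
end

section
/- (Theorem 2: lower bound for an arbitrary measurement scheme.) Let d ≥ 1, let B be a nonempty finite type, let (p_b, ρ_b)_{b∈B} be an ensemble of density matrices on ℂ^d, let (R_b)_{b∈B} be nonnegative reals, and let σ_b := (1+R_b)⁻¹ · (ρ_b + (R_b/d) · I). Let 𝒳 be any nonempty set of POVMs indexed by B. Define P_X(η) := sSup { ∑_b p_b · Re Tr(M_b ρ_b) : (M_b) ∈ 𝒳 } and P_X(ε) := sSup { ∑_b p_b · Re Tr(M_b σ_b) : (M_b) ∈ 𝒳 }. Then P_X(η) ≥ (1 + min_{b∈B} R_b) · P_X(ε) − max_{b∈B} (R_b · p_b). -/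
open Matrix
open scoped ComplexOrder
set_option maxHeartbeats 1000000

lemma psd_trace_nonneg_s5 {n : Type*} [Fintype n] [DecidableEq n] {A : Matrix n n ℂ}
    (hA : A.PosSemidef) : 0 ≤ A.trace := by
  rw [Matrix.trace]
  apply Finset.sum_nonneg
  intro i _
  exact hA.diag_nonneg

open scoped MatrixOrder in
lemma psd_mul_trace_nonneg {n : Type*} [Fintype n] [DecidableEq n]
    {A B : Matrix n n ℂ} (hA : A.PosSemidef) (hB : B.PosSemidef) :
    0 ≤ (A * B).trace := by
  have hs := (CFC.sqrt_nonneg A).posSemidef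
  have h1 : A * B = CFC.sqrt A * (CFC.sqrt A * B) := by
    rw [← mul_assoc, CFC.sqrt_mul_sqrt_self A hA.nonneg]
  rw [h1, trace_mul_comm, mul_assoc]
  have h2 : (CFC.sqrt A * B * CFC.sqrt A).PosSemidef := by
    have := hB.conjTranspose_mul_mul_same (CFC.sqrt A)
    rwa [hs.isHermitian.eq] at this
  exact psd_trace_nonneg_s5 (by rwa [mul_assoc] at h2)

lemma psd_mul_trace_re_nonneg {n : Type*} [Fintype n] [DecidableEq n]
    {A B : Matrix n n ℂ} (hA : A.PosSemidef) (hB : B.PosSemidef) :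
    0 ≤ ((A * B).trace).re := by
  have := psd_mul_trace_nonneg hA hB
  rw [Complex.le_def] at this
  exact this.1

lemma psd_sum {n ι : Type*} [Fintype n] [DecidableEq n] (s : Finset ι)
    (f : ι → Matrix n n ℂ) (hf : ∀ i ∈ s, (f i).PosSemidef) :
    (∑ i ∈ s, f i).PosSemidef := by
  classical
  induction s using Finset.induction_on with
  | empty => simpa using Matrix.PosSemidef.zero
  | insert a s h ih =>
    rw [Finset.sum_insert h]
    exact ((hf _ (Finset.mem_insert_self _ _)).add
      (ih fun i hi => hf i (Finset.mem_insert_of_mem hi)))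

lemma povm_term_le_one {n B : Type*} [Fintype n] [DecidableEq n] [Fintype B]
    {M : B → Matrix n n ℂ} (hM : IsPOVM M) (b : B)
    {ρ : Matrix n n ℂ} (hρ : IsDensityMatrix ρ) :
    ((M b * ρ).trace).re ≤ 1 := by
  classical
  have hN : (1 - M b : Matrix n n ℂ).PosSemidef := by
    have : (1 - M b : Matrix n n ℂ) = ∑ c ∈ Finset.univ.erase b, M c := by
      rw [← hM.2, Finset.sum_erase_eq_sub (Finset.mem_univ b)]
    rw [this]
    exact psd_sum _ _ fun c _ => hM.1 c
  have h0 : 0 ≤ (((1 - M b) * ρ).trace).re := psd_mul_trace_re_nonneg hN hρ.1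
  rw [Matrix.sub_mul, Matrix.one_mul, trace_sub, Complex.sub_re, hρ.2] at h0
  simpa using h0

theorem stmt5 {d : ℕ} (hd : 1 ≤ d) {B : Type*} [Fintype B] [Nonempty B]
    (p : B → ℝ) (ρ : B → Matrix (Fin d) (Fin d) ℂ)
    (hp : ∀ b, 0 ≤ p b) (hpsum : ∑ b, p b = 1)
    (hρ : ∀ b, IsDensityMatrix (ρ b))
    (R : B → ℝ) (hR : ∀ b, 0 ≤ R b)
    (σ : B → Matrix (Fin d) (Fin d) ℂ)
    (hσ : ∀ b, σ b = ((1 + R b)⁻¹ : ℝ) •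
      (ρ b + ((R b / d : ℝ)) • (1 : Matrix (Fin d) (Fin d) ℂ)))
    (𝒳 : Set (B → Matrix (Fin d) (Fin d) ℂ))
    (h𝒳ne : 𝒳.Nonempty) (h𝒳 : ∀ M ∈ 𝒳, IsPOVM M) :
    sSup { x : ℝ | ∃ M ∈ 𝒳, x = ∑ b, p b * ((M b * ρ b).trace).re } ≥
      (1 + Finset.univ.inf' Finset.univ_nonempty R) *
          sSup { x : ℝ | ∃ M ∈ 𝒳, x = ∑ b, p b * ((M b * σ b).trace).re } -
        Finset.univ.sup' Finset.univ_nonempty (fun b => R b * p b) := by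
  classical
  set r := Finset.univ.inf' Finset.univ_nonempty R with hrdef
  set K := Finset.univ.sup' Finset.univ_nonempty (fun b => R b * p b) with hKdef
  set Sρ := { x : ℝ | ∃ M ∈ 𝒳, x = ∑ b, p b * ((M b * ρ b).trace).re } with hSρ
  set Sσ := { x : ℝ | ∃ M ∈ 𝒳, x = ∑ b, p b * ((M b * σ b).trace).re } with hSσ
  have hr0 : 0 ≤ r := Finset.le_inf' _ _ fun b _ => hR b
  have hrb : ∀ b, r ≤ R b := fun b => Finset.inf'_le _ (Finset.mem_univ b)
  have hKb : ∀ b, R b * p b ≤ K := fun b => Finset.le_sup' (fun b => R b * p b) (Finset.mem_univ b)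
  have hK0 : 0 ≤ K := le_trans (mul_nonneg (hR (Classical.arbitrary B))
    (hp (Classical.arbitrary B))) (hKb _)
  have hd0 : (0:ℝ) < d := by exact_mod_cast Nat.lt_of_lt_of_le Nat.zero_lt_one hd
  -- expansion of σ trace
  have hexp : ∀ M : B → Matrix (Fin d) (Fin d) ℂ, ∀ b,
      ((M b * σ b).trace).re
        = (1 + R b)⁻¹ * (((M b * ρ b).trace).re + (R b / d) * ((M b).trace).re) := by
    intro M b
    rw [hσ b, Matrix.mul_smul, Matrix.mul_add, Matrix.mul_smul, Matrix.mul_one,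
      trace_smul, trace_add, trace_smul, Complex.smul_re, Complex.add_re, Complex.smul_re]
    simp [smul_eq_mul]
  -- sum of traces of a POVM
  have htrsum : ∀ M ∈ 𝒳, ∑ b, ((M b).trace).re = (d : ℝ) := by
    intro M hM
    have h1 := congrArg Matrix.trace (h𝒳 M hM).2
    rw [trace_sum, trace_one] at h1
    have := congrArg Complex.re h1
    rw [Complex.re_sum] at this
    simpa using this
  -- bounds for individual terms
  have hterm : ∀ M ∈ 𝒳, ∀ b, 0 ≤ ((M b * ρ b).trace).re ∧ ((M b * ρ b).trace).re ≤ 1 :=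
    fun M hM b => ⟨psd_mul_trace_re_nonneg ((h𝒳 M hM).1 b) (hρ b).1,
      povm_term_le_one (h𝒳 M hM) b (hρ b)⟩
  have hm0 : ∀ M ∈ 𝒳, ∀ b, 0 ≤ ((M b).trace).re := by
    intro M hM b
    have := psd_trace_nonneg_s5 ((h𝒳 M hM).1 b)
    rw [Complex.le_def] at this
    exact this.1
  -- upper bound 1 for Sρ elements
  have hub : ∀ x ∈ Sρ, x ≤ 1 := by
    rintro x ⟨M, hM, rfl⟩
    calc ∑ b, p b * ((M b * ρ b).trace).re ≤ ∑ b, p b * 1 :=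
          Finset.sum_le_sum fun b _ =>
            mul_le_mul_of_nonneg_left (hterm M hM b).2 (hp b)
      _ = 1 := by simp [hpsum]
  have hbdd : BddAbove Sρ := ⟨1, hub⟩
  -- key inequality
  have hkey : ∀ M ∈ 𝒳,
      (1 + r) * (∑ b, p b * ((M b * σ b).trace).re)
        ≤ (∑ b, p b * ((M b * ρ b).trace).re) + K := by
    intro M hM
    have step : ∀ b, (1 + r) * (p b * ((M b * σ b).trace).re)
        ≤ p b * ((M b * ρ b).trace).re + (K / d) * ((M b).trace).re := by
      intro b
      rw [hexp M b]
      set t := ((M b * ρ b).trace).re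
      set m := ((M b).trace).re
      have ht0 : 0 ≤ t := (hterm M hM b).1
      have hmb : 0 ≤ m := hm0 M hM b
      have h1Rb : (0:ℝ) < 1 + R b := by linarith [hR b]
      have hc : (1 + r) * (1 + R b)⁻¹ ≤ 1 := by
        rw [← div_eq_mul_inv, div_le_one h1Rb]
        linarith [hrb b]
      have e1 : (1 + r) * (p b * ((1 + R b)⁻¹ * (t + (R b / d) * m)))
          = ((1 + r) * (1 + R b)⁻¹) * (p b * t + (p b * (R b / d)) * m) := by ring
      have hnn : 0 ≤ p b * t + (p b * (R b / d)) * m :=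
        add_nonneg (mul_nonneg (hp b) ht0)
          (mul_nonneg (mul_nonneg (hp b) (div_nonneg (hR b) hd0.le)) hmb)
      have e2 : ((1 + r) * (1 + R b)⁻¹) * (p b * t + (p b * (R b / d)) * m)
          ≤ 1 * (p b * t + (p b * (R b / d)) * m) :=
        mul_le_mul_of_nonneg_right hc hnn
      have e3 : (p b * (R b / d)) * m ≤ (K / d) * m := by
        apply mul_le_mul_of_nonneg_right _ hmb
        have h4 : p b * (R b / (d:ℝ)) = (R b * p b) / (d:ℝ) := by ring
        rw [h4]
        gcongr
        exact hKb b
      calc (1 + r) * (p b * ((1 + R b)⁻¹ * (t + (R b / d) * m)))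
          ≤ 1 * (p b * t + (p b * (R b / d)) * m) := by rw [e1]; exact e2
        _ = p b * t + (p b * (R b / d)) * m := one_mul _
        _ ≤ p b * t + (K / d) * m := by linarith
    calc (1 + r) * (∑ b, p b * ((M b * σ b).trace).re)
        = ∑ b, (1 + r) * (p b * ((M b * σ b).trace).re) := Finset.mul_sum _ _ _
      _ ≤ ∑ b, (p b * ((M b * ρ b).trace).re + (K / d) * ((M b).trace).re) :=
          Finset.sum_le_sum fun b _ => step b
      _ = (∑ b, p b * ((M b * ρ b).trace).re) + (K / d) * ∑ b, ((M b).trace).re := by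
          rw [Finset.sum_add_distrib, ← Finset.mul_sum]
      _ = (∑ b, p b * ((M b * ρ b).trace).re) + K := by
          rw [htrsum M hM, div_mul_cancel₀ K hd0.ne']
  have h1r : (0:ℝ) < 1 + r := by linarith
  -- every element of Sσ satisfies (1+r)*x ≤ sSup Sρ + K
  have hσle : ∀ x ∈ Sσ, (1 + r) * x ≤ sSup Sρ + K := by
    rintro x ⟨M, hM, rfl⟩
    have h1 := hkey M hM
    have h2 : (∑ b, p b * ((M b * ρ b).trace).re) ≤ sSup Sρ :=
      le_csSup hbdd ⟨M, hM, rfl⟩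
    linarith
  have hσne : Sσ.Nonempty := by
    obtain ⟨M, hM⟩ := h𝒳ne
    exact ⟨_, M, hM, rfl⟩
  have hfin : sSup Sσ ≤ (sSup Sρ + K) / (1 + r) := by
    apply csSup_le hσne
    intro x hx
    rw [le_div_iff₀ h1r]
    linarith [hσle x hx]
  rw [ge_iff_le, sub_le_iff_le_add]
  have := (le_div_iff₀ h1r).mp hfin
  linarith
end

section
/- (Theorem 3: more indistinguishability with less entanglement, equal robustness case.) Let d ≥ 1, let ρ₁, ρ₂ be density matrices on ℂ^d, let p₁, p₂ ≥ 0 with p₁ + p₂ = 1, let R ≥ 0, and define σᵢ := (1+R)⁻¹ · (ρᵢ + (R/d) · I) for i = 1, 2. Then ‖p₁·σ₁ − p₂·σ₂‖₁ ≤ ‖p₁·ρ₁ − p₂·ρ₂‖₁; equivalently, the Helstrom success probability (1 + ‖p₁σ₁ − p₂σ₂‖₁)/2 of globally discriminating σ₁ from σ₂ is at most the Helstrom success probability (1 + ‖p₁ρ₁ − p₂ρ₂‖₁)/2 of globally discriminating ρ₁ from ρ₂. -/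
open Matrix
open scoped ComplexOrder

/-- The positive semidefinite square root of a positive semidefinite matrix (removed from
Mathlib; restored with its former definition). -/
noncomputable def Matrix.PosSemidef.sqrt {n : Type*} {𝕜 : Type*} [Fintype n] [DecidableEq n]
    [RCLike 𝕜] {A : Matrix n n 𝕜} (hA : A.PosSemidef) : Matrix n n 𝕜 :=
  hA.1.eigenvectorUnitary.1 * diagonal ((↑) ∘ (fun i => √(hA.1.eigenvalues i))) *
    (star hA.1.eigenvectorUnitary : Matrix n n 𝕜)

/-- The trace norm of a complex matrix: the trace of the positive semidefinite
square root of `Aᴴ * A`. -/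
noncomputable def traceNorm {n : Type*} [Fintype n] [DecidableEq n]
    (A : Matrix n n ℂ) : ℝ :=
  ((Matrix.posSemidef_conjTranspose_mul_self A).sqrt.trace).re

open scoped MatrixOrder Matrix.Norms.L2Operator in
lemma psd_eq_of_sq_eq_sq {n : Type*} [Fintype n] [DecidableEq n] {B C : Matrix n n ℂ}
    (hB : B.PosSemidef) (hC : C.PosSemidef) (h : B ^ 2 = C ^ 2) : B = C := by
  have hB' : 0 ≤ B := Matrix.nonneg_iff_posSemidef.mpr hB
  have hC' : 0 ≤ C := Matrix.nonneg_iff_posSemidef.mpr hC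
  rw [← CFC.sqrt_sq B hB', ← CFC.sqrt_sq C hC', h]

lemma psd_sqrt_posSemidef {n : Type*} [Fintype n] [DecidableEq n] {A : Matrix n n ℂ}
    (hA : A.PosSemidef) : hA.sqrt.PosSemidef := by
  unfold Matrix.PosSemidef.sqrt
  have := (Matrix.PosSemidef.diagonal (R := ℂ) (n := n)
    (d := ((↑) ∘ (fun i => √(hA.1.eigenvalues i)))) (fun i => by
      simp only [Function.comp_apply, Pi.zero_apply]
      exact_mod_cast Real.sqrt_nonneg _)).mul_mul_conjTranspose_same
    (hA.1.eigenvectorUnitary.1)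
  simpa [Matrix.star_eq_conjTranspose] using this

lemma psd_sqrt_sq {n : Type*} [Fintype n] [DecidableEq n] {A : Matrix n n ℂ}
    (hA : A.PosSemidef) : hA.sqrt ^ 2 = A := by
  have hU1 : star (hA.1.eigenvectorUnitary : Matrix n n ℂ) * hA.1.eigenvectorUnitary = 1 :=
    Matrix.mem_unitaryGroup_iff'.mp hA.1.eigenvectorUnitary.2
  have hd : (diagonal ((↑) ∘ (fun i => √(hA.1.eigenvalues i))) : Matrix n n ℂ) *
      diagonal ((↑) ∘ (fun i => √(hA.1.eigenvalues i))) =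
      diagonal (RCLike.ofReal ∘ hA.1.eigenvalues) := by
    rw [diagonal_mul_diagonal]
    congr 1
    funext i
    simp only [Function.comp_apply]
    rw [← Complex.ofReal_mul, Real.mul_self_sqrt (hA.eigenvalues_nonneg i)]
    rfl
  unfold Matrix.PosSemidef.sqrt
  rw [pow_two]
  conv_rhs => rw [hA.1.spectral_theorem, Unitary.conjStarAlgAut_apply]
  rw [mul_assoc, mul_assoc, ← mul_assoc (star _), ← mul_assoc (star _), hU1, one_mul, ← hd]
  simp only [mul_assoc]
  rfl

lemma traceNorm_conj_diag {n : Type*} [Fintype n] [DecidableEq n]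
    (U : Matrix.unitaryGroup n ℂ) (f : n → ℝ) :
    traceNorm ((U : Matrix n n ℂ) * Matrix.diagonal (fun i => (f i : ℂ)) *
      star (U : Matrix n n ℂ)) = ∑ i, |f i| := by
  set V : Matrix n n ℂ := (U : Matrix n n ℂ) with hV
  have hU1 : star V * V = 1 := Matrix.mem_unitaryGroup_iff'.mp U.2
  have hU2 : V * star V = 1 := Matrix.mem_unitaryGroup_iff.mp U.2
  set A := V * Matrix.diagonal (fun i => (f i : ℂ)) * star V with hA
  have key : ∀ g h : n → ℝ,
      (V * Matrix.diagonal (fun i => (g i : ℂ)) * star V) *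
      (V * Matrix.diagonal (fun i => (h i : ℂ)) * star V) =
      V * Matrix.diagonal (fun i => ((g i * h i : ℝ) : ℂ)) * star V := by
    intro g h
    rw [mul_assoc, mul_assoc, ← mul_assoc (star V), ← mul_assoc (star V), hU1, one_mul,
      ← mul_assoc, ← mul_assoc, mul_assoc V, diagonal_mul_diagonal]
    push_cast
    ring_nf
  have hAconj : Aᴴ = A := by
    rw [hA, conjTranspose_mul, conjTranspose_mul, diagonal_conjTranspose]
    rw [Matrix.star_eq_conjTranspose, conjTranspose_conjTranspose]
    rw [mul_assoc]
    congr 1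
    simp [Pi.star_def]
  set B := V * Matrix.diagonal (fun i => ((|f i| : ℝ) : ℂ)) * star V with hB
  have hBpsd : B.PosSemidef := by
    rw [hB, ← Matrix.star_eq_conjTranspose] at *
    have := (Matrix.posSemidef_diagonal_iff.mpr
      (fun i => Complex.zero_le_real.mpr (abs_nonneg (f i)))).mul_mul_conjTranspose_same V
    rw [Matrix.star_eq_conjTranspose]
    simpa using this
  have hsq : B ^ 2 = Aᴴ * A := by
    rw [hAconj, pow_two, hB, hA, key, key,
      show (fun i => ((|f i| * |f i| : ℝ) : ℂ)) = fun i => ((f i * f i : ℝ) : ℂ) from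
        funext fun i => by rw [abs_mul_abs_self]]
  have hBeq : B = (Matrix.posSemidef_conjTranspose_mul_self A).sqrt :=
    psd_eq_of_sq_eq_sq hBpsd (psd_sqrt_posSemidef _) (by rw [hsq, psd_sqrt_sq])
  rw [traceNorm, ← hBeq, hB, Matrix.trace_mul_cycle, hU1, one_mul,
    Matrix.trace_diagonal]
  push_cast
  simp

theorem stmt6 {d : ℕ} (hd : 1 ≤ d)
    (ρ₁ ρ₂ : Matrix (Fin d) (Fin d) ℂ)
    (hρ₁ : IsDensityMatrix ρ₁) (hρ₂ : IsDensityMatrix ρ₂)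
    (p₁ p₂ : ℝ) (hp₁ : 0 ≤ p₁) (hp₂ : 0 ≤ p₂) (hp : p₁ + p₂ = 1)
    (R : ℝ) (hR : 0 ≤ R)
    (σ₁ σ₂ : Matrix (Fin d) (Fin d) ℂ)
    (hσ₁ : σ₁ = ((1 + R)⁻¹ : ℝ) • (ρ₁ + ((R / d : ℝ)) • (1 : Matrix (Fin d) (Fin d) ℂ)))
    (hσ₂ : σ₂ = ((1 + R)⁻¹ : ℝ) • (ρ₂ + ((R / d : ℝ)) • (1 : Matrix (Fin d) (Fin d) ℂ))) :
    traceNorm (p₁ • σ₁ - p₂ • σ₂) ≤ traceNorm (p₁ • ρ₁ - p₂ • ρ₂) ∧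
      (1 + traceNorm (p₁ • σ₁ - p₂ • σ₂)) / 2 ≤
        (1 + traceNorm (p₁ • ρ₁ - p₂ • ρ₂)) / 2 := by
  have hdpos : (0:ℝ) < (d:ℝ) := by exact_mod_cast Nat.lt_of_lt_of_le Nat.zero_lt_one hd
  have h1R : (0:ℝ) < 1 + R := by linarith
  set X : Matrix (Fin d) (Fin d) ℂ := p₁ • ρ₁ - p₂ • ρ₂ with hXdef
  have hX : X.IsHermitian := by
    have h1 : ρ₁ᴴ = ρ₁ := hρ₁.1.1
    have h2 : ρ₂ᴴ = ρ₂ := hρ₂.1.1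
    simp [Matrix.IsHermitian, hXdef, conjTranspose_sub, conjTranspose_smul, h1, h2]
  set U := hX.eigenvectorUnitary with hUdef
  set lam := hX.eigenvalues with hlamdef
  have hfun : (RCLike.ofReal ∘ lam : Fin d → ℂ) = fun i => ((lam i : ℝ) : ℂ) := rfl
  have hspec : X = (U : Matrix (Fin d) (Fin d) ℂ) *
      Matrix.diagonal (fun i => ((lam i : ℝ) : ℂ)) * star (U : Matrix (Fin d) (Fin d) ℂ) := by
    rw [← hfun]; exact hX.spectral_theorem
  have hU1 : star (U : Matrix (Fin d) (Fin d) ℂ) * (U : Matrix (Fin d) (Fin d) ℂ) = 1 :=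
    Matrix.mem_unitaryGroup_iff'.mp U.2
  have hU2 : (U : Matrix (Fin d) (Fin d) ℂ) * star (U : Matrix (Fin d) (Fin d) ℂ) = 1 :=
    Matrix.mem_unitaryGroup_iff.mp U.2
  have hTX : traceNorm X = ∑ i, |lam i| := by
    rw [hspec]; exact traceNorm_conj_diag U lam
  -- sum of eigenvalues equals p₁ - p₂
  have htrX : X.trace = ((p₁ - p₂ : ℝ) : ℂ) := by
    rw [hXdef, Matrix.trace_sub, Matrix.trace_smul, Matrix.trace_smul, hρ₁.2, hρ₂.2]
    push_cast
    simp [Complex.real_smul]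
  have htr : ∑ i, lam i = p₁ - p₂ := by
    have h := congrArg Matrix.trace hspec
    rw [htrX, Matrix.trace_mul_cycle, hU1, one_mul, Matrix.trace_diagonal] at h
    exact_mod_cast h.symm
  set c : ℝ := (p₁ - p₂) * (R / d) with hcdef
  set g : Fin d → ℝ := fun i => (1 + R)⁻¹ * (lam i + c) with hgdef
  have hY : p₁ • σ₁ - p₂ • σ₂ = (U : Matrix (Fin d) (Fin d) ℂ) *
      Matrix.diagonal (fun i => ((g i : ℝ) : ℂ)) * star (U : Matrix (Fin d) (Fin d) ℂ) := by
    have hdiag : Matrix.diagonal (fun i => ((g i : ℝ) : ℂ)) =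
        ((1 + R)⁻¹ : ℝ) • Matrix.diagonal (fun i => ((lam i : ℝ) : ℂ)) +
        (((1 + R)⁻¹ * c : ℝ)) • (1 : Matrix (Fin d) (Fin d) ℂ) := by
      ext i j
      rcases eq_or_ne i j with h | h
      · subst h
        simp only [Matrix.diagonal_apply_eq, Matrix.add_apply, Matrix.smul_apply,
          Matrix.one_apply_eq, Complex.real_smul, hgdef]
        push_cast
        ring
      · simp [Matrix.diagonal_apply_ne _ h, Matrix.one_apply_ne h]
    rw [hdiag, Matrix.mul_add, Matrix.add_mul, Matrix.mul_smul, Matrix.smul_mul,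
      Matrix.mul_smul, Matrix.smul_mul, mul_one, hU2, ← hspec]
    rw [hσ₁, hσ₂, hXdef, hcdef]
    match_scalars <;> field_simp <;> ring
  have hTY : traceNorm (p₁ • σ₁ - p₂ • σ₂) = ∑ i, |g i| := by
    rw [hY]; exact traceNorm_conj_diag U g
  set S : ℝ := ∑ i, |lam i| with hSdef
  have hSnn : 0 ≤ S := Finset.sum_nonneg fun i _ => abs_nonneg _
  have habs : |p₁ - p₂| ≤ S := by
    rw [← htr]; exact Finset.abs_sum_le_sum_abs _ _
  have hsum : ∑ i, |g i| ≤ (1 + R)⁻¹ * (S + |p₁ - p₂| * R) := by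
    have hstep : ∀ i, |g i| ≤ (1 + R)⁻¹ * (|lam i| + |p₁ - p₂| * (R / d)) := by
      intro i
      rw [hgdef]
      simp only []
      rw [abs_mul, abs_of_nonneg (by positivity : (0:ℝ) ≤ (1 + R)⁻¹)]
      refine mul_le_mul_of_nonneg_left ?_ (by positivity)
      refine (abs_add_le _ _).trans ?_
      rw [hcdef, abs_mul, abs_of_nonneg (by positivity : (0:ℝ) ≤ R / d)]
    calc ∑ i, |g i| ≤ ∑ i, (1 + R)⁻¹ * (|lam i| + |p₁ - p₂| * (R / d)) :=
          Finset.sum_le_sum fun i _ => hstep i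
      _ = (1 + R)⁻¹ * (S + |p₁ - p₂| * R) := by
          rw [← Finset.mul_sum, Finset.sum_add_distrib, Finset.sum_const, Finset.card_univ,
            Fintype.card_fin, nsmul_eq_mul, hSdef]
          congr 1
          field_simp
  have hmain : traceNorm (p₁ • σ₁ - p₂ • σ₂) ≤ traceNorm (p₁ • ρ₁ - p₂ • ρ₂) := by
    rw [hTY, ← hXdef, hTX]
    refine hsum.trans ?_
    rw [inv_mul_le_iff₀ h1R]
    nlinarith [mul_le_mul_of_nonneg_right habs hR]
  exact ⟨hmain, by linarith⟩
end

section
/- (Remark 2: nonlocality without entanglement for the noisy Bell ensemble, i.e., the ratio P(η)/P(ε) exceeds 1.) In ℂ²⊗ℂ² (matrices indexed by Fin 2 × Fin 2), let ρ₁ = |φ⁺⟩⟨φ⁺| and ρ₂ = |φ⁻⟩⟨φ⁻| be the Bell-state projectors and σᵢ := (ρᵢ + I/2)/3 for i = 1, 2. Then: (a) there exists a POVM (M₁, M₂) with (1/2)·Re Tr(M₁ ρ₁) + (1/2)·Re Tr(M₂ ρ₂) = 1, so the two equiprobable Bell states can be discriminated perfectly; and (b) for every POVM (M₁, M₂), (1/2)·Re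 Tr(M₁ σ₁) + (1/2)·Re Tr(M₂ σ₂) ≤ 2/3, so the states of the closest separable ensemble cannot be discriminated perfectly; hence sSup over all POVMs of the success probability equals 1 for the Bell ensemble and equals 2/3 for the closest separable ensemble. -/
open Matrix
open scoped ComplexOrder

/-- The Bell state `|φ⁺⟩ = (|00⟩ + |11⟩)/√2` as a vector in `ℂ² ⊗ ℂ²`. -/
noncomputable def phiPlus : Fin 2 × Fin 2 → ℂ := fun x =>
  if x = (0, 0) then (Real.sqrt 2)⁻¹ else if x = (1, 1) then (Real.sqrt 2)⁻¹ else 0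

/-- The Bell state `|φ⁻⟩ = (|00⟩ − |11⟩)/√2` as a vector in `ℂ² ⊗ ℂ²`. -/
noncomputable def phiMinus : Fin 2 × Fin 2 → ℂ := fun x =>
  if x = (0, 0) then (Real.sqrt 2)⁻¹ else if x = (1, 1) then -(Real.sqrt 2)⁻¹ else 0

lemma hs : ((Real.sqrt 2 : ℝ)⁻¹ : ℂ) ^ 2 = 1/2 := by
  norm_cast
  rw [inv_pow, Real.sq_sqrt (by norm_num)]
  norm_num

lemma trP (M : Matrix (Fin 2 × Fin 2) (Fin 2 × Fin 2) ℂ) :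
    (M * vecMulVec phiPlus (star phiPlus)).trace
      = ((1/2 : ℝ) : ℂ) * (M (0,0) (0,0) + M (0,0) (1,1) + M (1,1) (0,0) + M (1,1) (1,1)) := by
  simp [Matrix.trace, Matrix.mul_apply, Matrix.vecMulVec_apply, phiPlus,
    Fintype.sum_prod_type, Fin.sum_univ_two, Matrix.diag, Prod.ext_iff]
  ring_nf
  rw [hs]; ring

lemma trM (M : Matrix (Fin 2 × Fin 2) (Fin 2 × Fin 2) ℂ) :
    (M * vecMulVec phiMinus (star phiMinus)).trace
      = ((1/2 : ℝ) : ℂ) * (M (0,0) (0,0) - M (0,0) (1,1) - M (1,1) (0,0) + M (1,1) (1,1)) := by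
  simp [Matrix.trace, Matrix.mul_apply, Matrix.vecMulVec_apply, phiMinus,
    Fintype.sum_prod_type, Fin.sum_univ_two, Matrix.diag, Prod.ext_iff]
  ring_nf
  rw [hs]; ring

lemma trS1 (M : Matrix (Fin 2 × Fin 2) (Fin 2 × Fin 2) ℂ) :
    (M * (((3:ℝ)⁻¹) • (vecMulVec phiPlus (star phiPlus)
        + ((2:ℝ)⁻¹) • (1 : Matrix (Fin 2 × Fin 2) (Fin 2 × Fin 2) ℂ)))).trace
      = ((1/6 : ℝ) : ℂ) * (M (0,0) (0,0) + M (0,0) (0,0) + M (0,0) (1,1) + M (1,1) (0,0)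
          + M (1,1) (1,1) + M (1,1) (1,1) + M (0,1) (0,1) + M (1,0) (1,0)) := by
  simp [Matrix.trace, Matrix.mul_apply, Matrix.vecMulVec_apply, phiPlus, Matrix.smul_apply,
    Matrix.add_apply, Matrix.one_apply, Complex.real_smul,
    Fintype.sum_prod_type, Fin.sum_univ_two, Matrix.diag, Prod.ext_iff]
  ring_nf
  rw [hs]; ring_nf

lemma trS2 (M : Matrix (Fin 2 × Fin 2) (Fin 2 × Fin 2) ℂ) :
    (M * (((3:ℝ)⁻¹) • (vecMulVec phiMinus (star phiMinus)
        + ((2:ℝ)⁻¹) • (1 : Matrix (Fin 2 × Fin 2) (Fin 2 × Fin 2) ℂ)))).trace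
      = ((1/6 : ℝ) : ℂ) * (M (0,0) (0,0) + M (0,0) (0,0) - M (0,0) (1,1) - M (1,1) (0,0)
          + M (1,1) (1,1) + M (1,1) (1,1) + M (0,1) (0,1) + M (1,0) (1,0)) := by
  simp [Matrix.trace, Matrix.mul_apply, Matrix.vecMulVec_apply, phiMinus, Matrix.smul_apply,
    Matrix.add_apply, Matrix.one_apply, Complex.real_smul,
    Fintype.sum_prod_type, Fin.sum_univ_two, Matrix.diag, Prod.ext_iff]
  ring_nf
  rw [hs]; ring_nf

lemma key (M : Matrix (Fin 2 × Fin 2) (Fin 2 × Fin 2) ℂ)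
    (h1 : M.PosSemidef) (h2 : (1 - M).PosSemidef) :
    (M (0,0) (1,1)).re + (M (1,1) (0,0)).re ≤ 1 := by
  have hx := h1.dotProduct_mulVec_nonneg (fun p => if p = ((0:Fin 2),(0:Fin 2)) then 1 else if p = (1,1) then (-1) else 0)
  have hy := h2.dotProduct_mulVec_nonneg (fun p => if p = ((0:Fin 2),(0:Fin 2)) then 1 else if p = (1,1) then 1 else 0)
  rw [Complex.le_def] at hx hy
  simp [dotProduct, Matrix.mulVec, Fintype.sum_prod_type, Fin.sum_univ_two,
    Matrix.one_apply, Matrix.sub_apply, Complex.add_re, Complex.sub_re, Complex.neg_re] at hx hy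
  simp only [Prod.mk_zero_zero, Prod.mk_one_one] at hx hy ⊢
  linarith [hx.1, hy.1]

lemma rho1_herm : (vecMulVec phiPlus (star phiPlus)).IsHermitian := by
  ext i j
  simp [Matrix.conjTranspose_apply, Matrix.vecMulVec_apply, phiPlus, Prod.ext_iff]
  split_ifs <;> simp <;> ring

lemma rho1_idem : vecMulVec phiPlus (star phiPlus) * vecMulVec phiPlus (star phiPlus)
    = vecMulVec phiPlus (star phiPlus) := by
  have h4 : ((Real.sqrt 2 : ℝ)⁻¹ : ℂ) ^ 4 = 1/4 := by
    rw [show (4:ℕ) = 2*2 from rfl, pow_mul, hs]; norm_num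
  ext i j
  simp [Matrix.mul_apply, Matrix.vecMulVec_apply, phiPlus,
    Fintype.sum_prod_type, Fin.sum_univ_two, Prod.ext_iff, Complex.conj_ofReal]
  have m : (Real.sqrt 2)⁻¹ * (Real.sqrt 2)⁻¹ = 1/2 := by
    rw [← mul_inv, Real.mul_self_sqrt (by norm_num)]; norm_num
  split_ifs <;> simp [Complex.conj_ofReal] <;> norm_cast <;> rw [m] <;> norm_num

lemma rho1_psd : (vecMulVec phiPlus (star phiPlus)).PosSemidef := by
  rw [vecMulVec_eq Unit, ← conjTranspose_replicateCol]
  exact posSemidef_self_mul_conjTranspose _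

lemma oneSubRho1_psd : ((1 : Matrix (Fin 2 × Fin 2) (Fin 2 × Fin 2) ℂ)
    - vecMulVec phiPlus (star phiPlus)).PosSemidef := by
  have h : (1 - vecMulVec phiPlus (star phiPlus))ᴴ * (1 - vecMulVec phiPlus (star phiPlus))
      = 1 - vecMulVec phiPlus (star phiPlus) := by
    rw [conjTranspose_sub, conjTranspose_one, rho1_herm.eq, sub_mul, one_mul, mul_sub, mul_one,
      rho1_idem]
    abel
  rw [← h]
  exact posSemidef_conjTranspose_mul_self _

lemma rho1_entries : ((vecMulVec phiPlus (star phiPlus)) (0,0) (1,1)).re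
    + ((vecMulVec phiPlus (star phiPlus)) (1,1) (0,0)).re = 1 := by
  have : ((Real.sqrt 2 : ℝ)⁻¹ : ℂ) * ((Real.sqrt 2 : ℝ)⁻¹ : ℂ) = 1/2 := by
    rw [← sq]; exact hs
  simp [Matrix.vecMulVec_apply, phiPlus, Prod.ext_iff, this]
  norm_num

lemma probP (M₁ M₂ : Matrix (Fin 2 × Fin 2) (Fin 2 × Fin 2) ℂ) (h : M₁ + M₂ = 1) :
    (1 / 2 : ℝ) * ((M₁ * vecMulVec phiPlus (star phiPlus)).trace).re
      + (1 / 2 : ℝ) * ((M₂ * vecMulVec phiMinus (star phiMinus)).trace).re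
      = 1/2 + (1/2) * ((M₁ (0,0) (1,1)).re + (M₁ (1,1) (0,0)).re) := by
  have h2 : M₂ = 1 - M₁ := eq_sub_of_add_eq' h
  subst h2
  rw [trP, trM]
  simp [Matrix.sub_apply, Matrix.one_apply, Prod.ext_iff, Complex.re_ofReal_mul,
    Complex.add_re, Complex.sub_re, Complex.one_re]
  ring

lemma probS (M₁ M₂ : Matrix (Fin 2 × Fin 2) (Fin 2 × Fin 2) ℂ) (h : M₁ + M₂ = 1) :
    (1 / 2 : ℝ) * ((M₁ * (((3:ℝ)⁻¹) • (vecMulVec phiPlus (star phiPlus)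
        + ((2:ℝ)⁻¹) • (1 : Matrix (Fin 2 × Fin 2) (Fin 2 × Fin 2) ℂ)))).trace).re
      + (1 / 2 : ℝ) * ((M₂ * (((3:ℝ)⁻¹) • (vecMulVec phiMinus (star phiMinus)
        + ((2:ℝ)⁻¹) • (1 : Matrix (Fin 2 × Fin 2) (Fin 2 × Fin 2) ℂ)))).trace).re
      = 1/2 + (1/6) * ((M₁ (0,0) (1,1)).re + (M₁ (1,1) (0,0)).re) := by
  have h2 : M₂ = 1 - M₁ := eq_sub_of_add_eq' h
  subst h2
  rw [trS1, trS2]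
  simp [Matrix.sub_apply, Matrix.one_apply, Prod.ext_iff, Complex.re_ofReal_mul,
    Complex.add_re, Complex.sub_re, Complex.one_re]
  ring

theorem stmt11
    (ρ₁ ρ₂ σ₁ σ₂ : Matrix (Fin 2 × Fin 2) (Fin 2 × Fin 2) ℂ)
    (hρ₁ : ρ₁ = vecMulVec phiPlus (star phiPlus))
    (hρ₂ : ρ₂ = vecMulVec phiMinus (star phiMinus))
    (hσ₁ : σ₁ = ((3 : ℝ)⁻¹) • (ρ₁ + ((2 : ℝ)⁻¹) • (1 : Matrix (Fin 2 × Fin 2) (Fin 2 × Fin 2) ℂ)))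
    (hσ₂ : σ₂ = ((3 : ℝ)⁻¹) • (ρ₂ + ((2 : ℝ)⁻¹) • (1 : Matrix (Fin 2 × Fin 2) (Fin 2 × Fin 2) ℂ))) :
    (∃ M₁ M₂ : Matrix (Fin 2 × Fin 2) (Fin 2 × Fin 2) ℂ,
        M₁.PosSemidef ∧ M₂.PosSemidef ∧ M₁ + M₂ = 1 ∧
        (1 / 2 : ℝ) * ((M₁ * ρ₁).trace).re + (1 / 2 : ℝ) * ((M₂ * ρ₂).trace).re = 1) ∧
    (∀ M₁ M₂ : Matrix (Fin 2 × Fin 2) (Fin 2 × Fin 2) ℂ,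
        M₁.PosSemidef → M₂.PosSemidef → M₁ + M₂ = 1 →
        (1 / 2 : ℝ) * ((M₁ * σ₁).trace).re + (1 / 2 : ℝ) * ((M₂ * σ₂).trace).re ≤ 2 / 3) ∧
    sSup { x : ℝ | ∃ M₁ M₂ : Matrix (Fin 2 × Fin 2) (Fin 2 × Fin 2) ℂ,
        M₁.PosSemidef ∧ M₂.PosSemidef ∧ M₁ + M₂ = 1 ∧
        x = (1 / 2 : ℝ) * ((M₁ * ρ₁).trace).re + (1 / 2 : ℝ) * ((M₂ * ρ₂).trace).re } = 1 ∧
    sSup { x : ℝ | ∃ M₁ M₂ : Matrix (Fin 2 × Fin 2) (Fin 2 × Fin 2) ℂ,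
        M₁.PosSemidef ∧ M₂.PosSemidef ∧ M₁ + M₂ = 1 ∧
        x = (1 / 2 : ℝ) * ((M₁ * σ₁).trace).re + (1 / 2 : ℝ) * ((M₂ * σ₂).trace).re } = 2 / 3 := by
  subst hρ₁ hρ₂ hσ₁ hσ₂
  have hsum : vecMulVec phiPlus (star phiPlus)
      + (1 - vecMulVec phiPlus (star phiPlus)) = 1 := by abel
  have hPρ : (1 / 2 : ℝ) * ((vecMulVec phiPlus (star phiPlus)
        * vecMulVec phiPlus (star phiPlus)).trace).re
      + (1 / 2 : ℝ) * (((1 - vecMulVec phiPlus (star phiPlus))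
        * vecMulVec phiMinus (star phiMinus)).trace).re = 1 := by
    rw [probP _ _ hsum, rho1_entries]; norm_num
  have hPσ : (1 / 2 : ℝ) * ((vecMulVec phiPlus (star phiPlus)
        * (((3:ℝ)⁻¹) • (vecMulVec phiPlus (star phiPlus)
          + ((2:ℝ)⁻¹) • (1 : Matrix (Fin 2 × Fin 2) (Fin 2 × Fin 2) ℂ)))).trace).re
      + (1 / 2 : ℝ) * (((1 - vecMulVec phiPlus (star phiPlus))
        * (((3:ℝ)⁻¹) • (vecMulVec phiMinus (star phiMinus)
          + ((2:ℝ)⁻¹) • (1 : Matrix (Fin 2 × Fin 2) (Fin 2 × Fin 2) ℂ)))).trace).re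
      = 2/3 := by
    rw [probS _ _ hsum, rho1_entries]; norm_num
  have hboundρ : ∀ M₁ M₂ : Matrix (Fin 2 × Fin 2) (Fin 2 × Fin 2) ℂ,
      M₁.PosSemidef → M₂.PosSemidef → M₁ + M₂ = 1 →
      (1 / 2 : ℝ) * ((M₁ * vecMulVec phiPlus (star phiPlus)).trace).re
        + (1 / 2 : ℝ) * ((M₂ * vecMulVec phiMinus (star phiMinus)).trace).re ≤ 1 := by
    intro M₁ M₂ h1 h2 h
    rw [probP _ _ h]
    have h2' : (1 - M₁).PosSemidef := by rwa [← eq_sub_of_add_eq' h]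
    have := key M₁ h1 h2'
    linarith
  have hboundσ : ∀ M₁ M₂ : Matrix (Fin 2 × Fin 2) (Fin 2 × Fin 2) ℂ,
      M₁.PosSemidef → M₂.PosSemidef → M₁ + M₂ = 1 →
      (1 / 2 : ℝ) * ((M₁ * (((3:ℝ)⁻¹) • (vecMulVec phiPlus (star phiPlus)
        + ((2:ℝ)⁻¹) • (1 : Matrix (Fin 2 × Fin 2) (Fin 2 × Fin 2) ℂ)))).trace).re
        + (1 / 2 : ℝ) * ((M₂ * (((3:ℝ)⁻¹) • (vecMulVec phiMinus (star phiMinus)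
        + ((2:ℝ)⁻¹) • (1 : Matrix (Fin 2 × Fin 2) (Fin 2 × Fin 2) ℂ)))).trace).re ≤ 2/3 := by
    intro M₁ M₂ h1 h2 h
    rw [probS _ _ h]
    have h2' : (1 - M₁).PosSemidef := by rwa [← eq_sub_of_add_eq' h]
    have := key M₁ h1 h2'
    linarith
  refine ⟨⟨_, _, rho1_psd, oneSubRho1_psd, hsum, hPρ⟩, hboundσ, ?_, ?_⟩
  · apply le_antisymm
    · refine csSup_le ⟨1, ?_⟩ ?_
      · exact ⟨_, _, rho1_psd, oneSubRho1_psd, hsum, hPρ.symm⟩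
      · rintro x ⟨M₁, M₂, h1, h2, h, rfl⟩
        exact hboundρ M₁ M₂ h1 h2 h
    · refine le_csSup ⟨1, ?_⟩ ?_
      · rintro x ⟨M₁, M₂, h1, h2, h, rfl⟩
        exact hboundρ M₁ M₂ h1 h2 h
      · exact ⟨_, _, rho1_psd, oneSubRho1_psd, hsum, hPρ.symm⟩
  · apply le_antisymm
    · refine csSup_le ⟨2/3, ?_⟩ ?_
      · exact ⟨_, _, rho1_psd, oneSubRho1_psd, hsum, hPσ.symm⟩
      · rintro x ⟨M₁, M₂, h1, h2, h, rfl⟩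
        exact hboundσ M₁ M₂ h1 h2 h
    · refine le_csSup ⟨2/3, ?_⟩ ?_
      · rintro x ⟨M₁, M₂, h1, h2, h, rfl⟩
        exact hboundσ M₁ M₂ h1 h2 h
      · exact ⟨_, _, rho1_psd, oneSubRho1_psd, hsum, hPσ.symm⟩
end
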